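/- For every λ ∈ ℂ with |λ| < 1 and all integers n and l, the matrix coefficients satisfy L(−n, −l) = conj(L(n, l)). -/

import Mathlib

/-- The matrix coefficient L(n,l) = (1/(2πi))·∮_{|z|=1} z^{l−n−1}·((1 − conj(λ)z)/(λ − z))^n dz
of the transfer operator of the circle map τ_λ(z) = z(λ − z)/(1 − conj(λ)z). -/
noncomputable def transferCoef (lam : ℂ) (n l : ℤ) : ℂ :=
  (1 / (2 * Real.pi * Complex.I)) *
    ∮ z in C(0, 1), z ^ (l - n - 1) * ((1 - (starRingEnd ℂ) lam * z) / (lam - z)) ^ n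

open MeasureTheory in
lemma conj_intervalIntegral_aux (f : ℝ → ℂ) (a b : ℝ) :
    ∫ x in a..b, (starRingEnd ℂ) (f x) = (starRingEnd ℂ) (∫ x in a..b, f x) := by
  simp [intervalIntegral, ← integral_conj]

/-- For λ ∈ ℂ with |λ| < 1 and all integers n, l, the matrix coefficients satisfy
L(−n, −l) = conj(L(n, l)). -/
theorem transferCoef_conj_symm (lam : ℂ) (hlam : ‖lam‖ < 1) (n l : ℤ) :
    transferCoef lam (-n) (-l) = (starRingEnd ℂ) (transferCoef lam n l) := by
  unfold transferCoef
  rw [circleIntegral, circleIntegral, map_mul, ← conj_intervalIntegral_aux]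
  have key : ∀ θ ∈ Set.uIcc (0 : ℝ) (2 * Real.pi),
      deriv (circleMap 0 1) θ • ((circleMap 0 1 θ) ^ (-l - -n - 1) *
        ((1 - (starRingEnd ℂ) lam * circleMap 0 1 θ) / (lam - circleMap 0 1 θ)) ^ (-n))
      = -((starRingEnd ℂ) (deriv (circleMap 0 1) θ • ((circleMap 0 1 θ) ^ (l - n - 1) *
        ((1 - (starRingEnd ℂ) lam * circleMap 0 1 θ) / (lam - circleMap 0 1 θ)) ^ n))) := by
    intro θ _
    set z := circleMap 0 1 θ with hzdef
    have hz : ‖z‖ = 1 := by simp [hzdef]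
    have hz0 : z ≠ 0 := by
      intro h; rw [h] at hz; simp at hz
    have hconj : (starRingEnd ℂ) z = z⁻¹ :=
      (Complex.inv_eq_conj (by exact hz)).symm
    have hd : lam - z ≠ 0 := by
      intro h
      rw [sub_eq_zero] at h; rw [h, hz] at hlam; exact lt_irrefl 1 hlam
    have hn : 1 - (starRingEnd ℂ) lam * z ≠ 0 := by
      intro h
      have h1 : (starRingEnd ℂ) lam * z = 1 := by
        have := sub_eq_zero.mp h; exact this.symm
      have : ‖(starRingEnd ℂ) lam * z‖ = 1 := by rw [h1]; simp
      rw [norm_mul, Complex.norm_conj, hz, mul_one] at this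
      rw [this] at hlam; exact lt_irrefl 1 hlam
    have hH : (starRingEnd ℂ) ((1 - (starRingEnd ℂ) lam * z) / (lam - z))
        = ((1 - (starRingEnd ℂ) lam * z) / (lam - z))⁻¹ := by
      have hden : (starRingEnd ℂ) lam - z⁻¹ ≠ 0 := by
        rw [← hconj, ← map_sub]
        exact fun h => hd ((map_eq_zero (starRingEnd ℂ)).mp h)
      rw [map_div₀, map_sub, map_sub, map_mul, map_one, Complex.conj_conj, hconj, inv_div,
        div_eq_div_iff hden hn]
      field_simp
      ring
    rw [deriv_circleMap, smul_eq_mul, smul_eq_mul, map_mul, map_mul, map_mul,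
      Complex.conj_I, map_zpow₀, map_zpow₀, hconj, hH, inv_zpow, inv_zpow, ← zpow_neg, ← zpow_neg]
    rw [show -l - -n - 1 = n - l - 1 by ring, show -(l - n - 1) = n - l + 1 by ring]
    set w := ((1 - (starRingEnd ℂ) lam * z) / (lam - z)) ^ (-n) with hw
    rw [show n - l - 1 = (n - l) + (-1) by ring, show n - l + 1 = (n - l) + 1 by ring,
      zpow_add₀ hz0, zpow_add₀ hz0, zpow_neg_one, zpow_one]
    field_simp
    ring
  rw [intervalIntegral.integral_congr key, intervalIntegral.integral_neg]
  have hc : (starRingEnd ℂ) (1 / (2 * (Real.pi : ℂ) * Complex.I))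
      = -(1 / (2 * (Real.pi : ℂ) * Complex.I)) := by
    have h2 : (starRingEnd ℂ) (2 * (Real.pi : ℂ) * Complex.I) = -(2 * (Real.pi : ℂ) * Complex.I) := by
      rw [map_mul, map_mul, Complex.conj_I, Complex.conj_ofReal, map_ofNat]
      ring
    rw [map_div₀, map_one, h2, div_neg]
  rw [hc]
  ring
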